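/- Let n = p + q, σ ∈ S_n, a = σ|{1,...,p} (viewed as a permutation in S_p) and b = st(σ|{p+1,...,n}) ∈ S_q. Then for any u ∈ S_p and v ∈ S_q: σ ≤ v △ u in the right weak order if and only if a ≤ u and b ≤ v. -/

import Mathlib

/-- Standardization (0-based): replace each letter by its rank among the letters of `w`. -/
def stW (w : List ℕ) : List ℕ := w.map (fun x => (w.filter (· < x)).length)

/-- `w` is the one-line word of a permutation of `{0, …, n-1}` where `n = w.length`. -/
def IsPermWord (w : List ℕ) : Prop := w.Perm (List.range w.length)

/-- The inversion set of a word: pairs `(j, i)` with `j > i` and `j` to the left of `i`. -/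
def invSet (w : List ℕ) : Set (ℕ × ℕ) :=
  {p | p.2 < p.1 ∧ ∃ k l : ℕ, k < l ∧ w[k]? = some p.1 ∧ w[l]? = some p.2}

/-- The right weak order: inclusion of inversion sets. -/
def weakLe (u v : List ℕ) : Prop := invSet u ⊆ invSet v

/-- Left shifted concatenation `v △ u`: the word `v̄ u`, `v̄` being `v` shifted by `|u|`. -/
def triangle (v u : List ℕ) : List ℕ := v.map (· + u.length) ++ u

/-- Right shifted concatenation `u □ v`: the word `u v̄`, `v̄` being `v` shifted by `|u|`. -/
def squareC (u v : List ℕ) : List ℕ := u ++ v.map (· + u.length)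

/- ### Auxiliary lemmas -/

open List

lemma pair_sublist_iff {w : List ℕ} {j i : ℕ} :
    (∃ k l : ℕ, k < l ∧ w[k]? = some j ∧ w[l]? = some i) ↔ [j, i] <+ w := by
  constructor
  · rintro ⟨k, l, hkl, hk, hl⟩
    obtain ⟨hk', hkv⟩ := List.getElem?_eq_some_iff.mp hk
    obtain ⟨hl', hlv⟩ := List.getElem?_eq_some_iff.mp hl
    have := List.map_getElem_sublist (l := w) (is := [⟨k, hk'⟩, ⟨l, hl'⟩])
      (by simp [hkl])
    simpa [hkv, hlv] using this
  · intro h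
    obtain ⟨is, heq, hp⟩ := List.sublist_eq_map_getElem h
    match is with
    | [k, l] =>
      simp only [List.map_cons, List.map_nil, List.cons.injEq, and_true] at heq
      simp only [List.pairwise_cons, List.mem_singleton, forall_eq] at hp
      exact ⟨k, l, hp.1, by simp [heq.1], by simp [heq.2]⟩
    | [] => simp at heq
    | [_] => simp at heq
    | _ :: _ :: _ :: _ => simp at heq

lemma mem_invSet {w : List ℕ} {x : ℕ × ℕ} :
    x ∈ invSet w ↔ x.2 < x.1 ∧ [x.1, x.2] <+ w := by
  unfold invSet
  rw [Set.mem_setOf_eq, pair_sublist_iff]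

lemma weakLe_iff {w w' : List ℕ} :
    weakLe w w' ↔ ∀ j i : ℕ, i < j → [j, i] <+ w → [j, i] <+ w' := by
  constructor
  · intro h j i hij hs
    exact (mem_invSet.mp (h (mem_invSet.mpr ⟨hij, hs⟩ : (j, i) ∈ invSet w))).2
  · intro h x hx
    obtain ⟨h1, h2⟩ := mem_invSet.mp hx
    exact mem_invSet.mpr ⟨h1, h x.1 x.2 h1 h2⟩

lemma pair_sublist_filter {w : List ℕ} {P : ℕ → Bool} {j i : ℕ} :
    [j, i] <+ w.filter P ↔ [j, i] <+ w ∧ P j ∧ P i := by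
  constructor
  · intro h
    refine ⟨h.trans List.filter_sublist, ?_, ?_⟩
    · exact (List.mem_filter.mp (h.subset (by simp))).2
    · exact (List.mem_filter.mp (h.subset (by simp))).2
  · rintro ⟨hs, hj, hi⟩
    have := hs.filter P
    simpa [List.filter, hj, hi] using this

lemma pair_sublist_map {f : ℕ → ℕ} {w : List ℕ} {j i : ℕ} :
    [j, i] <+ w.map f ↔ ∃ a b, [a, b] <+ w ∧ f a = j ∧ f b = i := by
  constructor
  · intro h
    obtain ⟨l', hl', heq⟩ := List.sublist_map_iff.mp h
    match l' with
    | [a, b] =>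
      simp only [List.map_cons, List.map_nil, List.cons.injEq, and_true] at heq
      exact ⟨a, b, hl', heq.1.symm, heq.2.symm⟩
    | [] => simp at heq
    | [_] => simp at heq
    | _ :: _ :: _ :: _ => simp at heq
  · rintro ⟨a, b, hs, ha, hb⟩
    have := hs.map f
    simpa [ha, hb] using this

lemma pair_sublist_append {a b : List ℕ} {j i : ℕ} :
    [j, i] <+ a ++ b ↔ [j, i] <+ a ∨ [j, i] <+ b ∨ (j ∈ a ∧ i ∈ b) := by
  rw [List.sublist_append_iff]
  constructor
  · rintro ⟨l₁, l₂, heq, h1, h2⟩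
    match l₁, heq with
    | [], heq =>
      right; left
      simp only [List.nil_append] at heq
      rwa [heq]
    | [x], heq =>
      simp only [List.cons_append, List.nil_append, List.cons.injEq] at heq
      right; right
      refine ⟨?_, ?_⟩
      · rw [heq.1]; exact List.singleton_sublist.mp h1
      · rw [← heq.2] at h2; exact List.singleton_sublist.mp h2
    | [x, y], heq =>
      simp only [List.cons_append, List.nil_append, List.cons.injEq, and_true] at heq
      left; rw [heq.1, heq.2.1]; exact h1
    | x :: y :: z :: l, heq => simp at heq
  · rintro (h | h | ⟨hj, hi⟩)
    · exact ⟨[j, i], [], by simp, h, List.nil_sublist _⟩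
    · exact ⟨[], [j, i], by simp, List.nil_sublist _, h⟩
    · exact ⟨[j], [i], by simp, List.singleton_sublist.mpr hj,
        List.singleton_sublist.mpr hi⟩

lemma countP_range_aux (p x : ℕ) :
    ∀ n, (List.range n).countP (fun y => decide (y < x) && decide (p ≤ y)) = min x n - p := by
  intro n
  induction n with
  | zero => simp
  | succ n ih =>
    rw [List.range_succ, List.countP_append, ih]
    by_cases h1 : p ≤ n <;> by_cases h2 : n < x <;>
      simp [List.countP_cons, h1, h2] <;> omega

lemma stW_filter_ge (σ : List ℕ) (p : ℕ) (hσ : IsPermWord σ) :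
    stW (σ.filter (fun x => p ≤ x)) = (σ.filter (fun x => p ≤ x)).map (fun x => x - p) := by
  apply List.map_congr_left
  intro x hx
  have hxσ : x ∈ σ := (List.mem_filter.mp hx).1
  have hxn : x < σ.length := by simpa using hσ.mem_iff.mp hxσ
  rw [← List.countP_eq_length_filter, List.countP_filter, hσ.countP_eq]
  rw [countP_range_aux]
  omega

/-- Let `n = p + q`, `σ ∈ S_n`, `a = σ|{0,…,p-1}` and
`b = st(σ|{p,…,n-1})`.  Then for `u ∈ S_p`, `v ∈ S_q`:
`σ ≤ v △ u` in the right weak order iff `a ≤ u` and `b ≤ v`. -/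
theorem weakLe_triangle_iff (p q : ℕ) (σ u v : List ℕ)
    (hσ : IsPermWord σ) (hu : IsPermWord u) (hv : IsPermWord v)
    (hσn : σ.length = p + q) (hup : u.length = p) (hvq : v.length = q) :
    weakLe σ (triangle v u) ↔
      weakLe (σ.filter (· < p)) u ∧ weakLe (stW (σ.filter (fun x => p ≤ x))) v := by
  have hσmem : ∀ x ∈ σ, x < p + q := fun x hx => by
    have := hσ.mem_iff.mp hx; rw [hσn] at this; simpa using this
  have humem : ∀ x, x ∈ u ↔ x < p := fun x => by
    rw [hu.mem_iff, hup, List.mem_range]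
  have hvmem : ∀ x, x ∈ v ↔ x < q := fun x => by
    rw [hv.mem_iff, hvq, List.mem_range]
  rw [stW_filter_ge σ p hσ]
  unfold triangle
  rw [hup]
  rw [weakLe_iff, weakLe_iff, weakLe_iff]
  constructor
  · intro h
    constructor
    · intro j i hij hs
      obtain ⟨hσs, hjP, hiP⟩ := pair_sublist_filter.mp hs
      have hjp : j < p := by simpa using hjP
      have := h j i hij hσs
      rcases pair_sublist_append.mp this with h1 | h1 | ⟨hj, hi⟩
      · obtain ⟨a, b, _, ha, _⟩ := pair_sublist_map.mp h1
        omega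
      · exact h1
      · obtain ⟨a, _, ha⟩ := List.mem_map.mp hj
        omega
    · intro j i hij hs
      obtain ⟨a, b, hab, ha, hb⟩ := pair_sublist_map.mp hs
      obtain ⟨habσ, haP, hbP⟩ := pair_sublist_filter.mp hab
      have hpa : p ≤ a := by simpa using haP
      have hpb : p ≤ b := by simpa using hbP
      have hab' : b < a := by omega
      have := h a b hab' habσ
      rcases pair_sublist_append.mp this with h1 | h1 | ⟨hj, hi⟩
      · obtain ⟨a', b', hs', ha', hb'⟩ := pair_sublist_map.mp h1
        have : a' = j := by omega
        have : b' = i := by omega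
        subst ha hb
        have hja : a' = a - p := by omega
        have hib : b' = b - p := by omega
        rw [← hja, ← hib]
        exact hs'
      · have := (humem b).mp (h1.subset (by simp))
        omega
      · have := (humem b).mp hi
        omega
  · rintro ⟨h1, h2⟩ j i hij hs
    have hjσ : j ∈ σ := hs.subset (by simp)
    have hiσ : i ∈ σ := hs.subset (by simp)
    apply pair_sublist_append.mpr
    by_cases hjp : j < p
    · right; left
      have hip : i < p := by omega
      exact h1 j i hij (pair_sublist_filter.mpr ⟨hs, by simpa, by simpa⟩)
    · by_cases hip : i < p
      · right; right
        refine ⟨?_, (humem i).mpr hip⟩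
        refine List.mem_map.mpr ⟨j - p, (hvmem _).mpr ?_, by omega⟩
        have := hσmem j hjσ
        omega
      · left
        have hfs : [j, i] <+ σ.filter (fun x => p ≤ x) :=
          pair_sublist_filter.mpr ⟨hs, by simpa using hjp, by simpa using hip⟩
        have hsub : [j - p, i - p] <+ (σ.filter (fun x => p ≤ x)).map (fun x => x - p) :=
          pair_sublist_map.mpr ⟨j, i, hfs, rfl, rfl⟩
        have hv' := h2 (j - p) (i - p) (by omega) hsub
        have := hv'.map (· + p)
        simpa [Nat.sub_add_cancel (by omega : p ≤ j),
          Nat.sub_add_cancel (by omega : p ≤ i)] using this
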